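/- arXiv:2508.12476 — 2 statements merged into one kernel-verified Lean document; each statement's English description precedes it below -/
import Mathlib

section
/- Let A be the 4th-order 2-dimensional CPS tensor with a_{11 1̄1̄} = a_{22 2̄2̄} = 1, a_{11 2̄2̄} = √−1, a_{22 1̄1̄} = −√−1, all other entries zero. Then f(A)(x) = |x₁|⁴ + i x₁² conj(x₂)² − i x₂² conj(x₁)² + |x₂|⁴ ≥ 0 for every x = (x₁,x₂) ∈ ℂ², i.e. A is Hermitian positive semidefinite, and f(A) vanishes at the nonzero vector (e^{iπ/4}, 1), so A is not Hermitian positive definite. -/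
open Complex Finset

/-- The conjugate polynomial associated to a `2m`-th order `n`-dimensional complex tensor. -/
noncomputable def fpoly {n m : ℕ} (A : (Fin m → Fin n) → (Fin m → Fin n) → ℂ)
    (x : Fin n → ℂ) : ℂ :=
  ∑ i : Fin m → Fin n, ∑ j : Fin m → Fin n,
    A i j * (∏ k, x (i k)) * ∏ k, (starRingEnd ℂ) (x (j k))

/-- Hermitian condition for a `2m`-th order tensor. -/
def IsHermitianTensor {n m : ℕ} (A : (Fin m → Fin n) → (Fin m → Fin n) → ℂ) : Prop :=
  ∀ i j, (starRingEnd ℂ) (A i j) = A j i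

/-- Conjugate partial-symmetric tensor. -/
def IsCPS {n m : ℕ} (A : (Fin m → Fin n) → (Fin m → Fin n) → ℂ) : Prop :=
  IsHermitianTensor A ∧
    ∀ (i j : Fin m → Fin n) (σ τ : Equiv.Perm (Fin m)), A (i ∘ σ) (j ∘ τ) = A i j

/-- `λ` is an `Ĥ`-eigenvalue of the `2(m+1)`-th order tensor `A` with eigenvector `x`. -/
noncomputable def IsHhatEigenpair {n m : ℕ}
    (A : (Fin (m+1) → Fin n) → (Fin (m+1) → Fin n) → ℂ)
    (lam : ℂ) (x : Fin n → ℂ) : Prop :=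
  x ≠ 0 ∧ ∀ p : Fin n,
    (∑ i : Fin m → Fin n, ∑ j : Fin (m+1) → Fin n,
      A (Fin.cons p i) j * (∏ k, x (i k)) * ∏ k, (starRingEnd ℂ) (x (j k)))
    = lam * (starRingEnd ℂ) (x p) * ((‖x p‖ : ℝ) : ℂ) ^ (2*m)

/-- Diagonal entry `a_{p...p p̄...p̄}`. -/
noncomputable def diagEntry {n m : ℕ}
    (A : (Fin m → Fin n) → (Fin m → Fin n) → ℂ) (p : Fin n) : ℂ :=
  A (fun _ => p) (fun _ => p)

/-- `r_p(A)`: sum of moduli of the off-diagonal entries of the `p`-th slice. -/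
noncomputable def rOff {n m : ℕ}
    (A : (Fin (m+1) → Fin n) → (Fin (m+1) → Fin n) → ℂ) (p : Fin n) : ℝ :=
  ∑ i : Fin m → Fin n, ∑ j : Fin (m+1) → Fin n,
    if i = (fun _ => p) ∧ j = (fun _ => p) then 0
    else ‖A (Fin.cons p i) j‖

/-- `r'_p(A)`: sum over tuples in which no index equals `p`. -/
noncomputable def rPrime {n m : ℕ}
    (A : (Fin (m+1) → Fin n) → (Fin (m+1) → Fin n) → ℂ) (p : Fin n) : ℝ :=
  ∑ i : Fin m → Fin n, ∑ j : Fin (m+1) → Fin n,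
    if (∀ k, i k ≠ p) ∧ (∀ k, j k ≠ p) then ‖A (Fin.cons p i) j‖ else 0

/-- `r̂_p(A) = r_p(A) - r'_p(A)`. -/
noncomputable def rHat {n m : ℕ}
    (A : (Fin (m+1) → Fin n) → (Fin (m+1) → Fin n) → ℂ) (p : Fin n) : ℝ :=
  rOff A p - rPrime A p

/-- Entry `a_{p q...q q̄...q̄}`. -/
noncomputable def aSlice {n m : ℕ}
    (A : (Fin (m+1) → Fin n) → (Fin (m+1) → Fin n) → ℂ) (p q : Fin n) : ℂ :=
  A (Fin.cons p (fun _ => q)) (fun _ => q)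

/-- `r_p^q(A) = r_p(A) - |a_{p q...q q̄...q̄}|`. -/
noncomputable def rOffSub {n m : ℕ}
    (A : (Fin (m+1) → Fin n) → (Fin (m+1) → Fin n) → ℂ) (p q : Fin n) : ℝ :=
  rOff A p - ‖aSlice A p q‖

/-- Hermitian positive definiteness. -/
def HermitianPD {n m : ℕ} (A : (Fin m → Fin n) → (Fin m → Fin n) → ℂ) : Prop :=
  ∀ x : Fin n → ℂ, x ≠ 0 → ∃ r : ℝ, fpoly A x = r ∧ 0 < r

/-- Hermitian positive semidefiniteness. -/
def HermitianPSD {n m : ℕ} (A : (Fin m → Fin n) → (Fin m → Fin n) → ℂ) : Prop :=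
  ∀ x : Fin n → ℂ, ∃ r : ℝ, fpoly A x = r ∧ 0 ≤ r

/-- The CPS tensor with a_{111̄1̄} = a_{222̄2̄} = 1, a_{112̄2̄} = i, a_{221̄1̄} = -i, zero otherwise. -/
noncomputable def exampleTensorB : (Fin 2 → Fin 2) → (Fin 2 → Fin 2) → ℂ := fun i j =>
  if i = ![0, 0] ∧ j = ![0, 0] then 1
  else if i = ![1, 1] ∧ j = ![1, 1] then 1
  else if i = ![0, 0] ∧ j = ![1, 1] then Complex.I
  else if i = ![1, 1] ∧ j = ![0, 0] then -Complex.I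
  else 0


lemma sum_pi_two' {M : Type*} [AddCommMonoid M] (g : (Fin 2 → Fin 2) → M) :
    ∑ i, g i = g ![0,0] + g ![0,1] + g ![1,0] + g ![1,1] := by
  rw [← (piFinTwoEquiv (fun _ : Fin 2 => Fin 2)).symm.sum_comp]
  simp [Fintype.sum_prod_type, Fin.sum_univ_two, piFinTwoEquiv]
  exact (add_assoc _ _ _).symm

lemma fpoly_exampleTensorB_eq (x : Fin 2 → ℂ) :
    fpoly exampleTensorB x
      = (x 0 ^ 2 - Complex.I * x 1 ^ 2) * (starRingEnd ℂ) (x 0 ^ 2 - Complex.I * x 1 ^ 2) := by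
  rw [fpoly, sum_pi_two']
  simp only [sum_pi_two', exampleTensorB, Fin.prod_univ_two]
  norm_num [funext_iff, Fin.forall_fin_two]
  linear_combination (((starRingEnd ℂ) (x 1))^2 * (x 1)^2) * Complex.I_sq

theorem exampleTensorB_psd_not_pd :
    HermitianPSD exampleTensorB ∧
    (![Complex.exp ((Real.pi / 4 : ℂ) * Complex.I), 1] : Fin 2 → ℂ) ≠ 0 ∧
    fpoly exampleTensorB ![Complex.exp ((Real.pi / 4 : ℂ) * Complex.I), 1] = 0 ∧
    ¬ HermitianPD exampleTensorB := by
  have hvne : (![Complex.exp ((Real.pi / 4 : ℂ) * Complex.I), 1] : Fin 2 → ℂ) ≠ 0 := by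
    intro h
    have h1 := congrFun h 1
    simp at h1
  have hsq : Complex.exp ((Real.pi / 4 : ℂ) * Complex.I) ^ 2 = Complex.I := by
    rw [pow_two, ← Complex.exp_add]
    have : (Real.pi / 4 : ℂ) * Complex.I + (Real.pi / 4 : ℂ) * Complex.I
        = (Real.pi : ℂ) / 2 * Complex.I := by push_cast; ring
    rw [this, Complex.exp_mul_I, Complex.cos_pi_div_two, Complex.sin_pi_div_two, one_mul,
      zero_add]
  have hzero : fpoly exampleTensorB ![Complex.exp ((Real.pi / 4 : ℂ) * Complex.I), 1] = 0 := by
    rw [fpoly_exampleTensorB_eq]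
    simp [hsq]
  refine ⟨?_, hvne, hzero, ?_⟩
  · intro x
    refine ⟨Complex.normSq (x 0 ^ 2 - Complex.I * x 1 ^ 2), ?_, Complex.normSq_nonneg _⟩
    rw [fpoly_exampleTensorB_eq, Complex.mul_conj]
  · intro h
    obtain ⟨r, hr, hrpos⟩ := h _ hvne
    rw [hzero] at hr
    have : r = 0 := by exact_mod_cast hr.symm
    simp [this] at hrpos
end

section
/- Let A be a 2m-th order n-dimensional CPS tensor. If all Ĥ-eigenvalues of A are nonnegative, then A is Hermitian positive semidefinite. (Key analytic step: the minimum of f(A) on the compact set B = {x ∈ ℂⁿ : Σ|x_i|^{2m} = 1} is attained at some v, and by Lagrange multipliers v is an Ĥ-eigenvector of A with Ĥ-eigenvalue λ = f(A)(v); hence f(A)(v) = λ ≥ 0, and homogeneity f(A)(tx) = t^{2m} f(A)(x) for t ∈ ℝ gives f(A)(x) ≥ 0 for all x.) -/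
open Complex Finset

section AuxCPS

open Finset

variable {n m : ℕ}

/-- `nrmR m x = ∑ |x_q|^{2(m+1)}`. -/
noncomputable def nrmR (m : ℕ) (x : Fin n → ℂ) : ℝ :=
  ∑ q, (‖x q‖) ^ (2*(m+1))

lemma nrmR_nonneg (x : Fin n → ℂ) : 0 ≤ nrmR m x :=
  Finset.sum_nonneg fun q _ => pow_nonneg (norm_nonneg _) _

lemma nrmR_smul (r : ℝ) (x : Fin n → ℂ) :
    nrmR m (r • x) = |r| ^ (2*(m+1)) * nrmR m x := by
  unfold nrmR
  rw [Finset.mul_sum]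
  refine Finset.sum_congr rfl fun q _ => ?_
  rw [Pi.smul_apply, Complex.real_smul, norm_mul, Complex.norm_real, Real.norm_eq_abs, mul_pow]

lemma nrmR_eq_zero {x : Fin n → ℂ} (h : nrmR m x = 0) : x = 0 := by
  have hnn : ∀ q ∈ (Finset.univ : Finset (Fin n)), 0 ≤ ‖x q‖ ^ (2*(m+1)) :=
    fun q _ => pow_nonneg (norm_nonneg _) _
  have h0 := (Finset.sum_eq_zero_iff_of_nonneg hnn).mp h
  funext q
  have h1 := h0 q (Finset.mem_univ q)
  have habs : ‖x q‖ = 0 := by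
    exact pow_eq_zero_iff (by omega) |>.mp h1
  simpa using habs

lemma fpoly_conj {M : ℕ} (A : (Fin M → Fin n) → (Fin M → Fin n) → ℂ)
    (hA : IsHermitianTensor A) (x : Fin n → ℂ) :
    (starRingEnd ℂ) (fpoly A x) = fpoly A x := by
  unfold fpoly
  rw [map_sum]
  simp_rw [map_sum, map_mul, map_prod, Complex.conj_conj]
  rw [Finset.sum_comm]
  refine Finset.sum_congr rfl fun j _ => Finset.sum_congr rfl fun i _ => ?_
  rw [hA]
  ring

lemma fpoly_real {M : ℕ} (A : (Fin M → Fin n) → (Fin M → Fin n) → ℂ)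
    (hA : IsHermitianTensor A) (x : Fin n → ℂ) :
    fpoly A x = ((fpoly A x).re : ℂ) :=
  (Complex.conj_eq_iff_re.mp (fpoly_conj A hA x)).symm

lemma fpoly_zero (A : (Fin (m+1) → Fin n) → (Fin (m+1) → Fin n) → ℂ) :
    fpoly A (0 : Fin n → ℂ) = 0 := by
  unfold fpoly
  apply Finset.sum_eq_zero; intro i _
  apply Finset.sum_eq_zero; intro j _
  simp [Finset.prod_const]

lemma fpoly_smul {M : ℕ} (A : (Fin M → Fin n) → (Fin M → Fin n) → ℂ)
    (t : ℝ) (x : Fin n → ℂ) :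
    fpoly A (t • x) = ((t : ℂ)) ^ (2*M) * fpoly A x := by
  unfold fpoly
  rw [Finset.mul_sum]
  refine Finset.sum_congr rfl fun i _ => ?_
  rw [Finset.mul_sum]
  refine Finset.sum_congr rfl fun j _ => ?_
  simp only [Pi.smul_apply, Complex.real_smul, map_mul, Complex.conj_ofReal,
    Finset.prod_mul_distrib, Finset.prod_const, Finset.card_univ, Fintype.card_fin]
  rw [two_mul, pow_add]
  ring

lemma fpoly_continuous {M : ℕ} (A : (Fin M → Fin n) → (Fin M → Fin n) → ℂ) :
    Continuous fun x : Fin n → ℂ => fpoly A x := by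
  unfold fpoly
  apply continuous_finset_sum; intro i _
  apply continuous_finset_sum; intro j _
  exact (continuous_const.mul (continuous_finset_prod _ fun k _ => continuous_apply (i k))).mul
    (continuous_finset_prod _ fun k _ => Complex.continuous_conj.comp (continuous_apply (j k)))

lemma nrmR_continuous : Continuous fun x : Fin n → ℂ => nrmR m x := by
  unfold nrmR
  apply continuous_finset_sum; intro q _
  exact (continuous_norm.comp (continuous_apply q)).pow _

lemma prod_univ_erase_zero (f : Fin (m+1) → ℂ) :
    ∏ l ∈ Finset.univ.erase 0, f l = ∏ k : Fin m, f k.succ := by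
  rw [Fin.univ_succ, Finset.erase_cons, Finset.prod_map]
  rfl

/-- Complex version of the norm function, for differentiation. -/
noncomputable def nrmC (m : ℕ) (x : Fin n → ℂ) : ℂ :=
  ∑ q, (x q * (starRingEnd ℂ) (x q)) ^ (m+1)

lemma nrmC_eq (x : Fin n → ℂ) : nrmC m x = ((nrmR m x : ℝ) : ℂ) := by
  unfold nrmC nrmR
  push_cast
  refine Finset.sum_congr rfl fun q _ => ?_
  rw [Complex.mul_conj, ← Complex.sq_norm, pow_mul]
  push_cast
  ring

lemma hasDerivAt_coord (v dd : Fin n → ℂ) (q : Fin n) :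
    HasDerivAt (fun t : ℝ => v q + t • dd q) (dd q) 0 := by
  simpa using ((hasDerivAt_id (0:ℝ)).smul_const (dd q)).const_add (v q)

lemma hasDerivAt_coord_conj (v dd : Fin n → ℂ) (q : Fin n) :
    HasDerivAt (fun t : ℝ => (starRingEnd ℂ) (v q + t • dd q)) ((starRingEnd ℂ) (dd q)) 0 := by
  have h1 := ((hasDerivAt_id (0:ℝ)).smul_const ((starRingEnd ℂ) (dd q))).const_add
    ((starRingEnd ℂ) (v q))
  have h2 : (fun t : ℝ => (starRingEnd ℂ) (v q + t • dd q))
      = fun t : ℝ => (starRingEnd ℂ) (v q) + t • (starRingEnd ℂ) (dd q) := by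
    funext t
    simp [Complex.real_smul, map_add, map_mul, Complex.conj_ofReal]
  rw [h2]
  simpa using h1

lemma hasDerivAt_fpoly (A : (Fin (m+1) → Fin n) → (Fin (m+1) → Fin n) → ℂ)
    (v dd : Fin n → ℂ) :
    HasDerivAt (fun t : ℝ => fpoly A (fun q => v q + t • dd q))
      (∑ i : Fin (m+1) → Fin n, ∑ j : Fin (m+1) → Fin n,
        (A i j * (∑ k, (∏ l ∈ Finset.univ.erase k, v (i l)) * dd (i k))
            * (∏ k, (starRingEnd ℂ) (v (j k)))
          + A i j * (∏ k, v (i k))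
            * (∑ k, (∏ l ∈ Finset.univ.erase k, (starRingEnd ℂ) (v (j l)))
                * (starRingEnd ℂ) (dd (j k))))) 0 := by
  have hPd : ∀ i : Fin (m+1) → Fin n,
      HasDerivAt (fun t : ℝ => ∏ k, (v (i k) + t • dd (i k)))
        (∑ k, (∏ l ∈ Finset.univ.erase k, v (i l)) * dd (i k)) 0 := by
    intro i
    have h2 := HasDerivAt.fun_finsetProd (u := Finset.univ)
      (f := fun k (t : ℝ) => v (i k) + t • dd (i k)) (f' := fun k => dd (i k))
      (fun k _ => hasDerivAt_coord v dd (i k))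
    simp only [zero_smul, add_zero, smul_eq_mul] at h2
    exact h2
  have hQd : ∀ j : Fin (m+1) → Fin n,
      HasDerivAt (fun t : ℝ => ∏ k, (starRingEnd ℂ) (v (j k) + t • dd (j k)))
        (∑ k, (∏ l ∈ Finset.univ.erase k, (starRingEnd ℂ) (v (j l)))
          * (starRingEnd ℂ) (dd (j k))) 0 := by
    intro j
    have h2 := HasDerivAt.fun_finsetProd (u := Finset.univ)
      (f := fun k (t : ℝ) => (starRingEnd ℂ) (v (j k) + t • dd (j k)))
      (f' := fun k => (starRingEnd ℂ) (dd (j k)))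
      (fun k _ => hasDerivAt_coord_conj v dd (j k))
    simp only [zero_smul, add_zero, smul_eq_mul] at h2
    exact h2
  have main : HasDerivAt (fun t : ℝ => ∑ i : Fin (m+1) → Fin n, ∑ j : Fin (m+1) → Fin n,
      A i j * (∏ k, (v (i k) + t • dd (i k)))
        * ∏ k, (starRingEnd ℂ) (v (j k) + t • dd (j k)))
      (∑ i : Fin (m+1) → Fin n, ∑ j : Fin (m+1) → Fin n,
        (A i j * (∑ k, (∏ l ∈ Finset.univ.erase k, v (i l)) * dd (i k))
            * (∏ k, (starRingEnd ℂ) (v (j k)))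
          + A i j * (∏ k, v (i k))
            * (∑ k, (∏ l ∈ Finset.univ.erase k, (starRingEnd ℂ) (v (j l)))
                * (starRingEnd ℂ) (dd (j k))))) 0 := by
    apply HasDerivAt.fun_sum
    intro i _
    apply HasDerivAt.fun_sum
    intro j _
    have h3 := ((hPd i).const_mul (A i j)).fun_mul (hQd j)
    simp only [zero_smul, add_zero] at h3
    convert h3 using 1
    all_goals ring
  exact main

lemma hasDerivAt_nrmC (v dd : Fin n → ℂ) :
    HasDerivAt (fun t : ℝ => nrmC m (fun q => v q + t • dd q))
      (∑ q, ((m+1 : ℕ) : ℂ) * (v q * (starRingEnd ℂ) (v q)) ^ m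
        * (dd q * (starRingEnd ℂ) (v q) + v q * (starRingEnd ℂ) (dd q))) 0 := by
  have main : HasDerivAt (fun t : ℝ => ∑ q,
      ((v q + t • dd q) * (starRingEnd ℂ) (v q + t • dd q)) ^ (m+1))
      (∑ q, ((m+1 : ℕ) : ℂ) * (v q * (starRingEnd ℂ) (v q)) ^ m
        * (dd q * (starRingEnd ℂ) (v q) + v q * (starRingEnd ℂ) (dd q))) 0 := by
    apply HasDerivAt.fun_sum
    intro q _
    have hmul := (hasDerivAt_coord v dd q).fun_mul (hasDerivAt_coord_conj v dd q)
    simp only [zero_smul, add_zero] at hmul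
    have h3 := HasDerivAt.fun_finsetProd (u := (Finset.univ : Finset (Fin (m+1))))
      (f := fun _ (t : ℝ) => (v q + t • dd q) * (starRingEnd ℂ) (v q + t • dd q))
      (f' := fun _ => dd q * (starRingEnd ℂ) (v q) + v q * (starRingEnd ℂ) (dd q))
      (fun k _ => hmul)
    have hfun : (fun t : ℝ => ((v q + t • dd q) * (starRingEnd ℂ) (v q + t • dd q)) ^ (m+1))
        = fun t : ℝ => ∏ _k : Fin (m+1),
            ((v q + t • dd q) * (starRingEnd ℂ) (v q + t • dd q)) := by
      funext t
      rw [Finset.prod_const, Finset.card_univ, Fintype.card_fin]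
    rw [hfun]
    convert h3 using 1
    · rfl
    simp only [zero_smul, add_zero, smul_eq_mul, Finset.prod_const,
      Finset.card_erase_of_mem (Finset.mem_univ _), Finset.card_univ, Fintype.card_fin,
      Nat.add_sub_cancel, Finset.sum_const, nsmul_eq_mul]
    push_cast
    ring
  exact main

set_option maxHeartbeats 1000000 in
lemma K1_perm (A : (Fin (m+1) → Fin n) → (Fin (m+1) → Fin n) → ℂ)
    (hsym : ∀ (i j : Fin (m+1) → Fin n) (σ : Equiv.Perm (Fin (m+1))), A (i ∘ σ) j = A i j)
    (v : Fin n → ℂ) (p : Fin n) :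
    (∑ i : Fin (m+1) → Fin n, ∑ j : Fin (m+1) → Fin n,
      A i j * (∑ k, if i k = p then ∏ l ∈ Finset.univ.erase k, v (i l) else 0)
        * ∏ k, (starRingEnd ℂ) (v (j k)))
    = ((m+1 : ℕ) : ℂ) * ∑ i : Fin m → Fin n, ∑ j : Fin (m+1) → Fin n,
        A (Fin.cons p i) j * (∏ k, v (i k)) * ∏ k, (starRingEnd ℂ) (v (j k)) := by
  classical
  have base : (∑ i : Fin (m+1) → Fin n, ∑ j : Fin (m+1) → Fin n,
      A i j * (if i 0 = p then ∏ l ∈ Finset.univ.erase 0, v (i l) else 0)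
        * ∏ k, (starRingEnd ℂ) (v (j k)))
      = ∑ i : Fin m → Fin n, ∑ j : Fin (m+1) → Fin n,
        A (Fin.cons p i) j * (∏ k, v (i k)) * ∏ k, (starRingEnd ℂ) (v (j k)) := by
    have hkey : ∀ F : (Fin (m+1) → Fin n) → ℂ,
        (∑ i : Fin (m+1) → Fin n, F i)
          = ∑ x : Fin n × (Fin m → Fin n), F (Fin.cons x.1 x.2) := fun F => by
      rw [← Equiv.sum_comp (Fin.consEquiv (fun _ => Fin n)) F]
      rfl
    rw [hkey (fun i => ∑ j : Fin (m+1) → Fin n,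
        A i j * (if i 0 = p then ∏ l ∈ Finset.univ.erase 0, v (i l) else 0)
          * ∏ k, (starRingEnd ℂ) (v (j k))), Fintype.sum_prod_type]
    rw [Finset.sum_eq_single_of_mem p (Finset.mem_univ p)]
    · refine Finset.sum_congr rfl fun i _ => Finset.sum_congr rfl fun j _ => ?_
      rw [Fin.cons_zero, if_pos rfl]
      congr 2
      rw [prod_univ_erase_zero]
      exact Finset.prod_congr rfl fun k _ => by rw [Fin.cons_succ]
    · intro a _ ha
      apply Finset.sum_eq_zero; intro i _
      apply Finset.sum_eq_zero; intro j _
      rw [Fin.cons_zero, if_neg ha, mul_zero, zero_mul]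
  calc (∑ i : Fin (m+1) → Fin n, ∑ j : Fin (m+1) → Fin n,
      A i j * (∑ k, if i k = p then ∏ l ∈ Finset.univ.erase k, v (i l) else 0)
        * ∏ k, (starRingEnd ℂ) (v (j k)))
      = ∑ i : Fin (m+1) → Fin n, ∑ k : Fin (m+1), ∑ j : Fin (m+1) → Fin n,
        A i j * (if i k = p then ∏ l ∈ Finset.univ.erase k, v (i l) else 0)
          * ∏ k', (starRingEnd ℂ) (v (j k')) := by
        refine Finset.sum_congr rfl fun i _ => ?_
        rw [Finset.sum_comm]
        refine Finset.sum_congr rfl fun j _ => ?_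
        rw [Finset.mul_sum, Finset.sum_mul]
    _ = ∑ k : Fin (m+1), ∑ i : Fin (m+1) → Fin n, ∑ j : Fin (m+1) → Fin n,
        A i j * (if i k = p then ∏ l ∈ Finset.univ.erase k, v (i l) else 0)
          * ∏ k', (starRingEnd ℂ) (v (j k')) := Finset.sum_comm
    _ = ∑ k : Fin (m+1), ∑ i : Fin (m+1) → Fin n, ∑ j : Fin (m+1) → Fin n,
        A i j * (if i 0 = p then ∏ l ∈ Finset.univ.erase 0, v (i l) else 0)
          * ∏ k', (starRingEnd ℂ) (v (j k')) := by
        refine Finset.sum_congr rfl fun k _ => ?_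
        refine Fintype.sum_equiv
          (Equiv.arrowCongr ((Equiv.swap (0 : Fin (m+1)) k).symm) (Equiv.refl (Fin n)))
          _ _ (fun x => ?_)
        have hex : (Equiv.arrowCongr ((Equiv.swap (0 : Fin (m+1)) k).symm) (Equiv.refl (Fin n))) x
            = x ∘ (Equiv.swap (0 : Fin (m+1)) k) := by
          funext l
          simp [Equiv.arrowCongr_apply]
        rw [hex]
        refine Finset.sum_congr rfl fun j _ => ?_
        rw [hsym x j (Equiv.swap (0 : Fin (m+1)) k)]
        congr 2
        have hmem : ∀ l : Fin (m+1),
            l ∈ Finset.univ.erase (0 : Fin (m+1))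
              ↔ (Equiv.swap (0 : Fin (m+1)) k) l ∈ Finset.univ.erase k := by
          intro l
          simp only [Finset.mem_erase, Finset.mem_univ, and_true]
          constructor
          · intro hl hc
            exact hl ((Equiv.swap (0 : Fin (m+1)) k).injective
              (by rw [hc, Equiv.swap_apply_left]))
          · intro hl hc
            exact hl (by rw [hc, Equiv.swap_apply_left])
        have hprod : ∏ l ∈ Finset.univ.erase (0 : Fin (m+1)),
              v (x ((Equiv.swap (0 : Fin (m+1)) k) l))
            = ∏ l ∈ Finset.univ.erase k, v (x l) :=
          Finset.prod_equiv (Equiv.swap (0 : Fin (m+1)) k) hmem (fun l _ => rfl)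
        have h0 : (x ∘ (Equiv.swap (0 : Fin (m+1)) k)) 0 = x k := by
          simp [Equiv.swap_apply_left]
        simp only [Function.comp_apply, Equiv.swap_apply_left]
        by_cases hxk : x k = p
        · rw [if_pos hxk, if_pos hxk]
          exact hprod.symm
        · rw [if_neg hxk, if_neg hxk]
    _ = ∑ k : Fin (m+1), (∑ i : Fin m → Fin n, ∑ j : Fin (m+1) → Fin n,
        A (Fin.cons p i) j * (∏ k', v (i k')) * ∏ k', (starRingEnd ℂ) (v (j k'))) :=
        Finset.sum_congr rfl fun k _ => base
    _ = ((m+1 : ℕ) : ℂ) * ∑ i : Fin m → Fin n, ∑ j : Fin (m+1) → Fin n,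
        A (Fin.cons p i) j * (∏ k, v (i k)) * ∏ k, (starRingEnd ℂ) (v (j k)) := by
        rw [Finset.sum_const, Finset.card_univ, Fintype.card_fin, nsmul_eq_mul]

set_option maxHeartbeats 1000000 in
lemma eig_eq (A : (Fin (m+1) → Fin n) → (Fin (m+1) → Fin n) → ℂ)
    (hcps : IsCPS A) (lam : ℝ) (v : Fin n → ℂ)
    (hglob : ∀ x : Fin n → ℂ, 0 ≤ (fpoly A x).re - lam * nrmR m x)
    (hv : (fpoly A v).re - lam * nrmR m v = 0) (p : Fin n) :
    (∑ i : Fin m → Fin n, ∑ j : Fin (m+1) → Fin n,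
      A (Fin.cons p i) j * (∏ k, v (i k)) * ∏ k, (starRingEnd ℂ) (v (j k)))
    = (lam : ℂ) * (starRingEnd ℂ) (v p) * ((‖v p‖ : ℝ) : ℂ) ^ (2*m) := by
  classical
  have hA := hcps.1
  have hsym : ∀ (i j : Fin (m+1) → Fin n) (σ : Equiv.Perm (Fin (m+1))),
      A (i ∘ σ) j = A i j := by
    intro i j σ
    have h2 := hcps.2 i j σ 1
    simpa using h2
  have key : ∀ c : ℂ, (c * ((∑ i : Fin (m+1) → Fin n, ∑ j : Fin (m+1) → Fin n,
        A i j * (∑ k, if i k = p then ∏ l ∈ Finset.univ.erase k, v (i l) else 0)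
          * ∏ k, (starRingEnd ℂ) (v (j k))) - ((lam:ℝ):ℂ) * (((m+1:ℕ) : ℂ) * (v p * (starRingEnd ℂ) (v p)) ^ m * (starRingEnd ℂ) (v p)))).re = 0 := by
    intro c
    set dd : Fin n → ℂ := fun q => if q = p then c else 0 with hdddef
    have hDf := hasDerivAt_fpoly A v dd
    have hDn := hasDerivAt_nrmC (m := m) v dd
    have hF := hDf.sub (HasDerivAt.const_mul ((lam:ℝ):ℂ) hDn)
    have hFre : HasDerivAt (fun t : ℝ =>
        (fpoly A (fun q => v q + t • dd q)
          - ((lam:ℝ):ℂ) * nrmC m (fun q => v q + t • dd q)).re)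
        (((∑ i : Fin (m+1) → Fin n, ∑ j : Fin (m+1) → Fin n,
        (A i j * (∑ k, (∏ l ∈ Finset.univ.erase k, v (i l)) * dd (i k))
            * (∏ k, (starRingEnd ℂ) (v (j k)))
          + A i j * (∏ k, v (i k))
            * (∑ k, (∏ l ∈ Finset.univ.erase k, (starRingEnd ℂ) (v (j l)))
                * (starRingEnd ℂ) (dd (j k))))) - ((lam:ℝ):ℂ) * (∑ q, ((m+1:ℕ) : ℂ) * (v q * (starRingEnd ℂ) (v q)) ^ m
        * (dd q * (starRingEnd ℂ) (v q) + v q * (starRingEnd ℂ) (dd q)))).re) 0 :=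
      Complex.reCLM.hasFDerivAt.comp_hasDerivAt (0:ℝ) hF
    have hval : ∀ s : ℝ, (fpoly A (fun q => v q + s • dd q)
        - ((lam:ℝ):ℂ) * nrmC m (fun q => v q + s • dd q)).re
        = (fpoly A (fun q => v q + s • dd q)).re - lam * nrmR m (fun q => v q + s • dd q) := by
      intro s
      rw [nrmC_eq, ← Complex.ofReal_mul, Complex.sub_re, Complex.ofReal_re]
    have hmin : IsLocalMin (fun t : ℝ =>
        (fpoly A (fun q => v q + t • dd q)
          - ((lam:ℝ):ℂ) * nrmC m (fun q => v q + t • dd q)).re) 0 := by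
      refine Filter.Eventually.of_forall fun t => ?_
      show (fpoly A (fun q => v q + (0:ℝ) • dd q)
          - ((lam:ℝ):ℂ) * nrmC m (fun q => v q + (0:ℝ) • dd q)).re
        ≤ (fpoly A (fun q => v q + t • dd q)
          - ((lam:ℝ):ℂ) * nrmC m (fun q => v q + t • dd q)).re
      rw [hval t, hval 0]
      have h00 : (fun q => v q + (0:ℝ) • dd q) = v := by funext q; simp
      rw [h00, hv]
      exact hglob _
    have hD0 : (((∑ i : Fin (m+1) → Fin n, ∑ j : Fin (m+1) → Fin n,
        (A i j * (∑ k, (∏ l ∈ Finset.univ.erase k, v (i l)) * dd (i k))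
            * (∏ k, (starRingEnd ℂ) (v (j k)))
          + A i j * (∏ k, v (i k))
            * (∑ k, (∏ l ∈ Finset.univ.erase k, (starRingEnd ℂ) (v (j l)))
                * (starRingEnd ℂ) (dd (j k))))) - ((lam:ℝ):ℂ) * (∑ q, ((m+1:ℕ) : ℂ) * (v q * (starRingEnd ℂ) (v q)) ^ m
        * (dd q * (starRingEnd ℂ) (v q) + v q * (starRingEnd ℂ) (dd q)))).re) = 0 :=
      hmin.hasDerivAt_eq_zero hFre
    have hdd1 : ∀ i : Fin (m+1) → Fin n,
        (∑ k, (∏ l ∈ Finset.univ.erase k, v (i l)) * dd (i k))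
        = c * ∑ k, (if i k = p then ∏ l ∈ Finset.univ.erase k, v (i l) else 0) := by
      intro i
      rw [Finset.mul_sum]
      refine Finset.sum_congr rfl fun k _ => ?_
      by_cases hik : i k = p
      · simp [hdddef, hik, mul_comm]
      · simp [hdddef, hik]
    have hdd2 : ∀ j : Fin (m+1) → Fin n,
        (∑ k, (∏ l ∈ Finset.univ.erase k, (starRingEnd ℂ) (v (j l)))
          * (starRingEnd ℂ) (dd (j k)))
        = (starRingEnd ℂ) c * ∑ k, (if j k = p then
            ∏ l ∈ Finset.univ.erase k, (starRingEnd ℂ) (v (j l)) else 0) := by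
      intro j
      rw [Finset.mul_sum]
      refine Finset.sum_congr rfl fun k _ => ?_
      by_cases hjk : j k = p
      · simp [hdddef, hjk, mul_comm]
      · simp [hdddef, hjk]
    have hK2 : (∑ i : Fin (m+1) → Fin n, ∑ j : Fin (m+1) → Fin n,
        A i j * (∏ k, v (i k))
          * (∑ k, if j k = p then ∏ l ∈ Finset.univ.erase k, (starRingEnd ℂ) (v (j l)) else 0))
        = (starRingEnd ℂ) (∑ i : Fin (m+1) → Fin n, ∑ j : Fin (m+1) → Fin n,
        A i j * (∑ k, if i k = p then ∏ l ∈ Finset.univ.erase k, v (i l) else 0)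
          * ∏ k, (starRingEnd ℂ) (v (j k))) := by
      rw [map_sum]
      simp only [map_sum, map_mul, map_prod, apply_ite (starRingEnd ℂ), map_zero,
        Complex.conj_conj]
      have hA' : ∀ i j, (starRingEnd ℂ) (A i j) = A j i := hA
      simp only [hA']
      rw [Finset.sum_comm]
      refine Finset.sum_congr rfl fun i _ => Finset.sum_congr rfl fun j _ => ?_
      ring
    have hDfeq : (∑ i : Fin (m+1) → Fin n, ∑ j : Fin (m+1) → Fin n,
        (A i j * (∑ k, (∏ l ∈ Finset.univ.erase k, v (i l)) * dd (i k))
            * (∏ k, (starRingEnd ℂ) (v (j k)))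
          + A i j * (∏ k, v (i k))
            * (∑ k, (∏ l ∈ Finset.univ.erase k, (starRingEnd ℂ) (v (j l)))
                * (starRingEnd ℂ) (dd (j k)))))
        = c * (∑ i : Fin (m+1) → Fin n, ∑ j : Fin (m+1) → Fin n,
        A i j * (∑ k, if i k = p then ∏ l ∈ Finset.univ.erase k, v (i l) else 0)
          * ∏ k, (starRingEnd ℂ) (v (j k))) + (starRingEnd ℂ) c * (starRingEnd ℂ) (∑ i : Fin (m+1) → Fin n, ∑ j : Fin (m+1) → Fin n,
        A i j * (∑ k, if i k = p then ∏ l ∈ Finset.univ.erase k, v (i l) else 0)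
          * ∏ k, (starRingEnd ℂ) (v (j k))) := by
      calc (∑ i : Fin (m+1) → Fin n, ∑ j : Fin (m+1) → Fin n,
        (A i j * (∑ k, (∏ l ∈ Finset.univ.erase k, v (i l)) * dd (i k))
            * (∏ k, (starRingEnd ℂ) (v (j k)))
          + A i j * (∏ k, v (i k))
            * (∑ k, (∏ l ∈ Finset.univ.erase k, (starRingEnd ℂ) (v (j l)))
                * (starRingEnd ℂ) (dd (j k)))))
          = (∑ i : Fin (m+1) → Fin n, ∑ j : Fin (m+1) → Fin n,
        (c * (A i j * (∑ k, if i k = p then ∏ l ∈ Finset.univ.erase k, v (i l) else 0)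
            * ∏ k, (starRingEnd ℂ) (v (j k)))
          + (starRingEnd ℂ) c * (A i j * (∏ k, v (i k))
            * (∑ k, if j k = p then ∏ l ∈ Finset.univ.erase k, (starRingEnd ℂ) (v (j l)) else 0)))) := by
            refine Finset.sum_congr rfl fun i _ => Finset.sum_congr rfl fun j _ => ?_
            rw [hdd1 i, hdd2 j]
            ring
        _ = c * (∑ i : Fin (m+1) → Fin n, ∑ j : Fin (m+1) → Fin n,
        A i j * (∑ k, if i k = p then ∏ l ∈ Finset.univ.erase k, v (i l) else 0)
          * ∏ k, (starRingEnd ℂ) (v (j k))) + (starRingEnd ℂ) c * (∑ i : Fin (m+1) → Fin n, ∑ j : Fin (m+1) → Fin n,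
        A i j * (∏ k, v (i k))
          * (∑ k, if j k = p then ∏ l ∈ Finset.univ.erase k, (starRingEnd ℂ) (v (j l)) else 0)) := by
            simp only [Finset.sum_add_distrib, ← Finset.mul_sum]
        _ = c * (∑ i : Fin (m+1) → Fin n, ∑ j : Fin (m+1) → Fin n,
        A i j * (∑ k, if i k = p then ∏ l ∈ Finset.univ.erase k, v (i l) else 0)
          * ∏ k, (starRingEnd ℂ) (v (j k))) + (starRingEnd ℂ) c * (starRingEnd ℂ) (∑ i : Fin (m+1) → Fin n, ∑ j : Fin (m+1) → Fin n,
        A i j * (∑ k, if i k = p then ∏ l ∈ Finset.univ.erase k, v (i l) else 0)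
          * ∏ k, (starRingEnd ℂ) (v (j k))) := by rw [hK2]
    have hDneq : (∑ q, ((m+1:ℕ) : ℂ) * (v q * (starRingEnd ℂ) (v q)) ^ m
        * (dd q * (starRingEnd ℂ) (v q) + v q * (starRingEnd ℂ) (dd q)))
        = c * (((m+1:ℕ) : ℂ) * (v p * (starRingEnd ℂ) (v p)) ^ m * (starRingEnd ℂ) (v p)) + (starRingEnd ℂ) c * (starRingEnd ℂ) (((m+1:ℕ) : ℂ) * (v p * (starRingEnd ℂ) (v p)) ^ m * (starRingEnd ℂ) (v p)) := by
      rw [Finset.sum_eq_single_of_mem p (Finset.mem_univ p)]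
      · have hddp : dd p = c := by rw [hdddef]; simp
        rw [hddp]
        simp only [map_mul, map_pow, map_natCast, Complex.conj_conj]
        ring
      · intro q _ hq
        have hddq : dd q = 0 := by rw [hdddef]; simp [hq]
        rw [hddq]
        simp
    have hsplit : (∑ i : Fin (m+1) → Fin n, ∑ j : Fin (m+1) → Fin n,
        (A i j * (∑ k, (∏ l ∈ Finset.univ.erase k, v (i l)) * dd (i k))
            * (∏ k, (starRingEnd ℂ) (v (j k)))
          + A i j * (∏ k, v (i k))
            * (∑ k, (∏ l ∈ Finset.univ.erase k, (starRingEnd ℂ) (v (j l)))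
                * (starRingEnd ℂ) (dd (j k))))) - ((lam:ℝ):ℂ) * (∑ q, ((m+1:ℕ) : ℂ) * (v q * (starRingEnd ℂ) (v q)) ^ m
        * (dd q * (starRingEnd ℂ) (v q) + v q * (starRingEnd ℂ) (dd q)))
        = (c * ((∑ i : Fin (m+1) → Fin n, ∑ j : Fin (m+1) → Fin n,
        A i j * (∑ k, if i k = p then ∏ l ∈ Finset.univ.erase k, v (i l) else 0)
          * ∏ k, (starRingEnd ℂ) (v (j k))) - ((lam:ℝ):ℂ) * (((m+1:ℕ) : ℂ) * (v p * (starRingEnd ℂ) (v p)) ^ m * (starRingEnd ℂ) (v p))))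
          + (starRingEnd ℂ) (c * ((∑ i : Fin (m+1) → Fin n, ∑ j : Fin (m+1) → Fin n,
        A i j * (∑ k, if i k = p then ∏ l ∈ Finset.univ.erase k, v (i l) else 0)
          * ∏ k, (starRingEnd ℂ) (v (j k))) - ((lam:ℝ):ℂ) * (((m+1:ℕ) : ℂ) * (v p * (starRingEnd ℂ) (v p)) ^ m * (starRingEnd ℂ) (v p)))) := by
      rw [hDfeq, hDneq]
      simp only [map_mul, map_sub, Complex.conj_ofReal]
      ring
    rw [hsplit, Complex.add_re, Complex.conj_re] at hD0
    linarith
  have h1 := key 1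
  have hI := key Complex.I
  rw [one_mul] at h1
  have hIm : ((∑ i : Fin (m+1) → Fin n, ∑ j : Fin (m+1) → Fin n,
        A i j * (∑ k, if i k = p then ∏ l ∈ Finset.univ.erase k, v (i l) else 0)
          * ∏ k, (starRingEnd ℂ) (v (j k))) - ((lam:ℝ):ℂ) * (((m+1:ℕ) : ℂ) * (v p * (starRingEnd ℂ) (v p)) ^ m * (starRingEnd ℂ) (v p))).im = 0 := by
    simp only [Complex.mul_re, Complex.I_re, Complex.I_im, zero_mul, one_mul,
      zero_sub, neg_eq_zero] at hI
    exact hI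
  have hK0 : (∑ i : Fin (m+1) → Fin n, ∑ j : Fin (m+1) → Fin n,
        A i j * (∑ k, if i k = p then ∏ l ∈ Finset.univ.erase k, v (i l) else 0)
          * ∏ k, (starRingEnd ℂ) (v (j k))) - ((lam:ℝ):ℂ) * (((m+1:ℕ) : ℂ) * (v p * (starRingEnd ℂ) (v p)) ^ m * (starRingEnd ℂ) (v p)) = 0 := by
    apply Complex.ext
    · simpa using h1
    · simpa using hIm
  have hK1Np : (∑ i : Fin (m+1) → Fin n, ∑ j : Fin (m+1) → Fin n,
        A i j * (∑ k, if i k = p then ∏ l ∈ Finset.univ.erase k, v (i l) else 0)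
          * ∏ k, (starRingEnd ℂ) (v (j k))) = ((lam:ℝ):ℂ) * (((m+1:ℕ) : ℂ) * (v p * (starRingEnd ℂ) (v p)) ^ m * (starRingEnd ℂ) (v p)) :=
    sub_eq_zero.mp hK0
  have hperm := K1_perm A hsym v p
  have hmne : ((m+1:ℕ) : ℂ) ≠ 0 := Nat.cast_ne_zero.mpr (Nat.succ_ne_zero m)
  apply mul_left_cancel₀ hmne
  rw [← hperm, hK1Np]
  rw [Complex.mul_conj, ← Complex.sq_norm]
  push_cast
  ring

end AuxCPS

theorem cps_psd_of_nonneg_hhat_eigenvalues {n m : ℕ}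
    (A : (Fin (m+1) → Fin n) → (Fin (m+1) → Fin n) → ℂ)
    (hcps : IsCPS A)
    (h : ∀ (lam : ℂ) (x : Fin n → ℂ), IsHhatEigenpair A lam x → 0 ≤ lam.re ∧ lam.im = 0) :
    HermitianPSD A := by
  intro x
  rcases Nat.eq_zero_or_pos n with hn | hn
  · subst hn
    haveI hE : IsEmpty (Fin (m+1) → Fin 0) := ⟨fun f => (f 0).elim0⟩
    refine ⟨0, ?_, le_refl 0⟩
    unfold fpoly
    rw [Finset.univ_eq_empty, Finset.sum_empty]
    norm_num
  · set S : Set (Fin n → ℂ) := {y | nrmR m y = 1} with hSdef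
    have hclosed : IsClosed S := isClosed_eq nrmR_continuous continuous_const
    have hbdd : Bornology.IsBounded S := by
      apply (Metric.isBounded_closedBall (x := (0 : Fin n → ℂ)) (r := 1)).subset
      intro y hy
      rw [Metric.mem_closedBall, dist_zero_right, pi_norm_le_iff_of_nonneg zero_le_one]
      intro q
      have hle : ‖y q‖ ^ (2*(m+1)) ≤ 1 := by
        have h1 := Finset.single_le_sum (f := fun q' => ‖y q'‖ ^ (2*(m+1)))
          (fun q' _ => pow_nonneg (norm_nonneg _) _) (Finset.mem_univ q)
        have hy1 : nrmR m y = 1 := hy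
        rw [← hy1]
        exact h1
      exact (pow_le_one_iff_of_nonneg (norm_nonneg _) (by omega)).mp hle
    have hcpt : IsCompact S := Metric.isCompact_of_isClosed_isBounded hclosed hbdd
    have hne : S.Nonempty := by
      refine ⟨fun q => if q = ⟨0, hn⟩ then 1 else 0, ?_⟩
      show nrmR m _ = 1
      unfold nrmR
      rw [Finset.sum_eq_single_of_mem ⟨0, hn⟩ (Finset.mem_univ _)]
      · simp
      · intro q _ hq
        simp [hq]
    obtain ⟨v, hvS, hvmin'⟩ := hcpt.exists_isMinOn hne
      (Complex.continuous_re.comp (fpoly_continuous A)).continuousOn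
    have hvmin : ∀ y ∈ S, (fpoly A v).re ≤ (fpoly A y).re := fun y hy => hvmin' hy
    have hv1 : nrmR m v = 1 := hvS
    set lam : ℝ := (fpoly A v).re with hlam
    have hscale : ∀ y : Fin n → ℂ, lam * nrmR m y ≤ (fpoly A y).re := by
      intro y
      rcases eq_or_ne (nrmR m y) 0 with h0 | h0
      · rw [h0, mul_zero, nrmR_eq_zero h0, fpoly_zero, Complex.zero_re]
      · have hs : 0 < nrmR m y := lt_of_le_of_ne (nrmR_nonneg y) (Ne.symm h0)
        set s := nrmR m y with hsdef
        set t : ℝ := s ^ (((2*(m+1) : ℕ) : ℝ))⁻¹ with htdef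
        have ht : 0 < t := Real.rpow_pos_of_pos hs _
        have hte : t ^ (2*(m+1)) = s := by
          rw [htdef, ← Real.rpow_natCast (s ^ (((2*(m+1) : ℕ) : ℝ))⁻¹) (2*(m+1)),
            ← Real.rpow_mul hs.le,
            inv_mul_cancel₀ (Nat.cast_ne_zero.mpr (by omega)), Real.rpow_one]
        have h1 : nrmR m (t⁻¹ • y) = 1 := by
          rw [nrmR_smul, abs_of_pos (inv_pos.mpr ht), inv_pow, hte]
          field_simp
          exact hsdef.symm
        have h2 := hvmin (t⁻¹ • y) h1
        have h3 : (fpoly A (t⁻¹ • y)).re = s⁻¹ * (fpoly A y).re := by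
          rw [fpoly_smul, ← Complex.ofReal_pow, Complex.re_ofReal_mul, inv_pow, hte]
        rw [h3] at h2
        calc lam * s ≤ (s⁻¹ * (fpoly A y).re) * s := mul_le_mul_of_nonneg_right h2 hs.le
          _ = (fpoly A y).re := by field_simp
    have hglob : ∀ y : Fin n → ℂ, 0 ≤ (fpoly A y).re - lam * nrmR m y := fun y => by
      linarith [hscale y]
    have hv0 : (fpoly A v).re - lam * nrmR m v = 0 := by rw [hv1, ← hlam]; ring
    have hpair : IsHhatEigenpair A (lam : ℂ) v := by
      constructor
      · intro hv00
        rw [hv00] at hv1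
        simp [nrmR] at hv1
      · intro p
        exact eig_eq A hcps lam v hglob hv0 p
    obtain ⟨hre, -⟩ := h (lam : ℂ) v hpair
    rw [Complex.ofReal_re] at hre
    refine ⟨(fpoly A x).re, fpoly_real A hcps.1 x, ?_⟩
    have h1 := hscale x
    have h2 : 0 ≤ lam * nrmR m x := mul_nonneg hre (nrmR_nonneg x)
    linarith
end
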